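/- Let n ≥ 2, let B be a symmetric 2^(n−1) × 2^(n−1) matrix over F2 with zero diagonal, and let u ∈ F2^(2^(n−1)). Define the 2^n × 2^n matrix A, indexed by Bool × Fin 2^(n−1), by A (b,i) (b',j) = B i j + (if b then u j else 0) + (if b' then u i else 0). Suppose that A has pairwise distinct rows, that the rank of A over F2 equals n, and that the top half of A (the matrix of rows A (false, i)) has rank n−1 over F2. Then the rank of B over F2 equals n − 2. -/

import Mathlib

open Module Submodule

section EvenDim

variable {K : Type} [Field K]

/-- A nondegenerate alternating bilinear form lives on an even-dimensional space. -/
lemma even_finrank_of_alt_nondeg (N : ℕ) :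
    ∀ (V : Type) [AddCommGroup V] [Module K V] [FiniteDimensional K V]
      (B : LinearMap.BilinForm K V), B.IsAlt → B.Nondegenerate →
      finrank K V = N → Even N := by
  induction N using Nat.strong_induction_on with
  | _ N ih =>
    intro V _ _ _ B halt hnd hdim
    rcases Nat.eq_zero_or_pos N with h0 | hpos
    · simp [h0]
    have : Nontrivial V := by
      rw [← finrank_pos_iff (R := K)]; omega
    obtain ⟨x, hx⟩ := exists_ne (0 : V)
    obtain ⟨y, hxy⟩ : ∃ y, B x y ≠ 0 := by
      by_contra h
      push_neg at h
      exact hx (hnd.1 x h)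
    have hyx : B y x ≠ 0 := by
      rw [← halt.neg_eq]
      simpa using hxy
    set U : Submodule K V := Submodule.span K {x, y} with hU
    have hxU : x ∈ U := subset_span (by simp)
    have hyU : y ∈ U := subset_span (by simp)
    have hUnd : (B.restrict U).Nondegenerate := by
      refine (LinearMap.IsRefl.nondegenerate_iff_separatingLeft (fun a b h => halt.isRefl a.1 b.1 h)).2 ?_
      rintro ⟨mm, hm⟩ hm0
      obtain ⟨a, b, rfl⟩ := Submodule.mem_span_pair.1 hm
      have h1 : B (a • x + b • y) y = 0 := hm0 ⟨y, hyU⟩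
      have h2 : B (a • x + b • y) x = 0 := hm0 ⟨x, hxU⟩
      simp only [map_add, map_smul, LinearMap.add_apply, LinearMap.smul_apply,
        smul_eq_mul, halt.self_eq_zero, mul_zero, add_zero, zero_add] at h1 h2
      have ha : a = 0 := by
        rcases mul_eq_zero.1 h1 with h | h
        · exact h
        · exact absurd h hxy
      have hb : b = 0 := by
        rcases mul_eq_zero.1 h2 with h | h
        · exact h
        · exact absurd h hyx
      ext
      simp [ha, hb]
    have hrefl := halt.isRefl
    have hcompl := LinearMap.BilinForm.isCompl_orthogonal_of_restrict_nondegenerate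
      (B := B) hrefl hUnd
    set W := B.orthogonal U with hW
    have hWnd : (B.restrict W).Nondegenerate := by
      apply B.nondegenerate_restrict_of_disjoint_orthogonal hrefl
      rw [hW, LinearMap.BilinForm.orthogonal_orthogonal hnd hrefl]
      exact hcompl.disjoint.symm
    have hli : LinearIndependent K ![x, y] := by
      rw [LinearIndependent.pair_iff]
      intro a b hab
      have h1 : B (a • x + b • y) y = 0 := by rw [hab]; simp
      have h2 : B (a • x + b • y) x = 0 := by rw [hab]; simp
      simp only [map_add, map_smul, LinearMap.add_apply, LinearMap.smul_apply,
        smul_eq_mul, halt.self_eq_zero, mul_zero, add_zero, zero_add] at h1 h2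
      constructor
      · rcases mul_eq_zero.1 h1 with h | h
        · exact h
        · exact absurd h hxy
      · rcases mul_eq_zero.1 h2 with h | h
        · exact h
        · exact absurd h hyx
    have hrange : Set.range ![x, y] = {x, y} := by
      ext z
      simp [Fin.exists_fin_two, or_comm]
    have hU2 : finrank K U = 2 := by
      rw [hU, ← hrange, finrank_span_eq_card hli]
      simp
    have hWdim : finrank K ↥W = N - 2 := by
      rw [hW, LinearMap.BilinForm.finrank_orthogonal hnd, hU2, hdim]
    have hNle : 2 ≤ N := by
      rw [← hU2, ← hdim]
      exact Submodule.finrank_le U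
    have hWalt : (B.restrict W).IsAlt := by
      intro m
      simpa using halt m.1
    have hev := ih (N - 2) (by omega) W (B.restrict W) hWalt hWnd hWdim
    obtain ⟨k, hk⟩ := hev
    exact ⟨k + 1, by omega⟩

end EvenDim

/-- A symmetric matrix over `F2` with zero diagonal has even rank. -/
lemma even_rank_of_alt {ι : Type} [Fintype ι] [DecidableEq ι]
    (M : Matrix ι ι (ZMod 2)) (hs : M.IsSymm) (hd : ∀ i, M i i = 0) :
    Even M.rank := by
  classical
  set β : LinearMap.BilinForm (ZMod 2) (ι → ZMod 2) :=
    LinearMap.mk₂ (ZMod 2) (fun x y => dotProduct x (M.mulVec y))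
      (fun x x' y => add_dotProduct _ _ _)
      (fun a x y => smul_dotProduct _ _ _)
      (fun x y y' => by rw [Matrix.mulVec_add, dotProduct_add])
      (fun a x y => by rw [Matrix.mulVec_smul, dotProduct_smul]) with hβ
  have happ : ∀ x y, β x y = dotProduct x (M.mulVec y) := fun x y => rfl
  have hsym : ∀ i j, M j i = M i j := fun i j => hs.apply i j
  have halt : β.IsAlt := by
    intro x
    have hx : β x x = ∑ p ∈ Finset.univ ×ˢ Finset.univ, x p.1 * M p.1 p.2 * x p.2 := by
      rw [happ]
      simp only [dotProduct, Matrix.mulVec, Finset.mul_sum]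
      rw [← Finset.sum_product']
      exact Finset.sum_congr rfl (fun p _ => by ring)
    rw [hx]
    apply Finset.sum_ninvolution Prod.swap
    · rintro ⟨i, j⟩
      simp only [Prod.swap_prod_mk]
      rw [hsym i j, show x j * M i j * x i = x i * M i j * x j from by ring]
      exact CharTwo.add_self_eq_zero _
    · rintro ⟨i, j⟩ hne heq
      apply hne
      have hij : j = i := by
        have := congrArg Prod.fst heq
        simpa using this
      subst hij
      simp [hd]
    · intro a; exact Finset.mem_univ _
    · intro a; exact Prod.swap_swap a
  set R := LinearMap.ker M.mulVecLin with hR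
  obtain ⟨W, hcompl⟩ := Submodule.exists_isCompl R
  have hnd : (β.restrict W).Nondegenerate := by
    refine (LinearMap.IsRefl.nondegenerate_iff_separatingLeft (fun a b h => halt.isRefl a.1 b.1 h)).2 ?_
    rintro ⟨mm, hm⟩ h0
    have hall : ∀ v, β mm v = 0 := by
      intro v
      have hv : v ∈ R ⊔ W := by rw [hcompl.sup_eq_top]; trivial
      obtain ⟨r, hr, w, hw, rfl⟩ := Submodule.mem_sup.1 hv
      have h1 : β mm r = 0 := by
        rw [happ, show M.mulVec r = 0 from hr, dotProduct_zero]
      have h2 : β mm w = 0 := h0 ⟨w, hw⟩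
      rw [map_add, h1, h2, add_zero]
    have hm0 : mm ∈ R := by
      show M.mulVecLin mm = 0
      rw [Matrix.mulVecLin_apply]
      funext j
      have hj := hall (Pi.single j 1)
      rw [happ] at hj
      simp only [Matrix.mulVec_single, mul_one, MulOpposite.op_one, one_smul] at hj
      rw [show (0 : ι → ZMod 2) j = 0 from rfl]
      rw [← hj]
      simp only [Matrix.mulVec, dotProduct, Matrix.col_apply]
      exact Finset.sum_congr rfl (fun i _ => by rw [hsym i j]; ring)
    have : mm = 0 := by
      have := Submodule.disjoint_def.1 hcompl.disjoint mm hm0 hm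
      exact this
    exact Subtype.ext this
  have hralt : (β.restrict W).IsAlt := by
    intro m
    simpa using halt m.1
  have heq : M.rank = finrank (ZMod 2) ↥W := by
    have h1 := LinearMap.finrank_range_add_finrank_ker M.mulVecLin
    rw [← hR] at h1
    have h2 := Submodule.finrank_add_eq_of_isCompl hcompl
    rw [Matrix.rank]
    omega
  rw [heq]
  exact even_finrank_of_alt_nondeg _ W (β.restrict W) hralt hnd rfl

/-- Let `n ≥ 2`, let `B` be a symmetric `2^(n-1) × 2^(n-1)` matrix over `F2` with zero
diagonal, and `u ∈ F2^(2^(n-1))`. Let `A` be the `2^n × 2^n` matrix (indexed by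
`Bool × Fin 2^(n-1)`) with `A (b,i) (b',j) = B i j + (if b then u j else 0) +
(if b' then u i else 0)`. If `A` has pairwise distinct rows, `rank A = n`, and the top half
of `A` has rank `n - 1`, then the rank of `B` over `F2` equals `n - 2`. -/
theorem stmt_16 (n : ℕ) (hn : 2 ≤ n)
    (B : Matrix (Fin (2 ^ (n - 1))) (Fin (2 ^ (n - 1))) (ZMod 2))
    (hBsymm : B.IsSymm) (hBdiag : ∀ i, B i i = 0)
    (u : Fin (2 ^ (n - 1)) → ZMod 2)
    (A : Matrix (Bool × Fin (2 ^ (n - 1))) (Bool × Fin (2 ^ (n - 1))) (ZMod 2))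
    (hA : ∀ (b : Bool) (i : Fin (2 ^ (n - 1))) (b' : Bool) (j : Fin (2 ^ (n - 1))),
      A (b, i) (b', j) = B i j + (if b then u j else 0) + (if b' then u i else 0))
    (hrows : Function.Injective fun p => A p)
    (hrank : A.rank = n)
    (htop : (Matrix.of fun i (q : Bool × Fin (2 ^ (n - 1))) => A (false, i) q).rank = n - 1) :
    B.rank = n - 2 := by
  classical
  have hAsymm : A.IsSymm := by
    rw [Matrix.IsSymm]
    ext p q
    rcases p with ⟨b, i⟩
    rcases q with ⟨b', j⟩
    rw [Matrix.transpose_apply, hA, hA, hBsymm.apply j i]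
    ring
  have hAdiag : ∀ p, A p p = 0 := by
    rintro ⟨b, i⟩
    rw [hA, hBdiag, zero_add]
    rcases b with _ | _
    · simp
    · simp only [if_true]
      exact CharTwo.add_self_eq_zero _
  have heven_n : Even n := by
    have := even_rank_of_alt A hAsymm hAdiag
    rwa [hrank] at this
  have hevenB : Even B.rank := even_rank_of_alt B hBsymm hBdiag
  set T : Matrix (Fin (2 ^ (n - 1))) (Bool × Fin (2 ^ (n - 1))) (ZMod 2) :=
    Matrix.of fun i (q : Bool × Fin (2 ^ (n - 1))) => A (false, i) q with hT
  have hBle : B.rank ≤ T.rank := by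
    rw [Matrix.rank_eq_finrank_span_cols, Matrix.rank_eq_finrank_span_cols]
    apply Submodule.finrank_mono
    apply Submodule.span_mono
    rintro _ ⟨j, rfl⟩
    refine ⟨(false, j), ?_⟩
    funext i
    simp only [Matrix.transpose_apply, hT, Matrix.of_apply, hA]
    simp
  have hTle : T.rank ≤ B.rank + 1 := by
    rw [Matrix.rank_eq_finrank_span_row, Matrix.rank_eq_finrank_span_row]
    unfold Matrix.row
    set L : (Fin (2 ^ (n - 1)) → ZMod 2) →ₗ[ZMod 2] (Bool × Fin (2 ^ (n - 1)) → ZMod 2) :=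
      LinearMap.funLeft (ZMod 2) (ZMod 2) Prod.snd with hL
    set e : Bool × Fin (2 ^ (n - 1)) → ZMod 2 := fun p => if p.1 then 1 else 0 with he
    have hsub : Submodule.span (ZMod 2) (Set.range T) ≤
        (Submodule.span (ZMod 2) (Set.range B)).map L ⊔ Submodule.span (ZMod 2) {e} := by
      rw [Submodule.span_le]
      rintro _ ⟨i, rfl⟩
      have hTi : T i = L (B i) + u i • e := by
        funext p
        rcases p with ⟨b, j⟩
        simp only [hT, Matrix.of_apply, hA, hL, LinearMap.funLeft_apply, he, Pi.add_apply,
          Pi.smul_apply, smul_eq_mul]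
        rcases b with _ | _ <;> simp
      rw [SetLike.mem_coe, hTi]
      exact Submodule.add_mem _
        (Submodule.mem_sup_left (Submodule.mem_map_of_mem (Submodule.subset_span ⟨i, rfl⟩)))
        (Submodule.mem_sup_right (Submodule.smul_mem _ _ (Submodule.subset_span rfl)))
    have h1 := Submodule.finrank_mono hsub
    have h2 := Submodule.finrank_add_le_finrank_add_finrank
      ((Submodule.span (ZMod 2) (Set.range B)).map L) (Submodule.span (ZMod 2) {e})
    have h3 : finrank (ZMod 2) ↥((Submodule.span (ZMod 2) (Set.range B)).map L) ≤
        finrank (ZMod 2) ↥(Submodule.span (ZMod 2) (Set.range B)) :=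
      Submodule.finrank_map_le _ _
    have h4 : finrank (ZMod 2) ↥(Submodule.span (ZMod 2) ({e} : Set (Bool × Fin (2 ^ (n - 1)) → ZMod 2))) = 1 := by
      have hm1 : 0 < 2 ^ (n - 1) := pow_pos (by norm_num) _
      have hee : e ≠ 0 := by
        intro h0
        have := congrFun h0 (true, ⟨0, hm1⟩)
        simp [he] at this
      exact finrank_span_singleton hee
    omega
  obtain ⟨a, ha⟩ := heven_n
  obtain ⟨c, hc⟩ := hevenB
  rw [htop] at hBle hTle
  omega
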